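/- Let μ > 0 be a real number and let t̃, t_d be integers with 1 ≤ t̃ < t_d. Then Σ_{t = t̃+1}^{t_d} exp(2μ(t_d − t))/t ≤ exp(2μ(t_d − t̃))·ln(1 + 1/(2μ·t̃)) − (1/2)·ln(1 + 1/(μ·t_d)). -/

import Mathlib

open scoped BigOperators

open Real


noncomputable def hfun (c s : ℝ) : ℝ := Real.exp (-(c * s)) * Real.log (1 + 1 / (c * s))

lemma hfun_deriv (c u : ℝ) (hc : 0 < c) (hu : 0 < u) :
    HasDerivAt (hfun c)
      (-(Real.exp (-(c * u)) * (c * Real.log (1 + 1 / (c * u)) + 1 / (u * (c * u + 1))))) u := by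
  have hcu : c * u ≠ 0 := by positivity
  have hinner : (1 : ℝ) + 1 / (c * u) ≠ 0 := by positivity
  have h1 : HasDerivAt (fun s => Real.exp (-(c * s))) (-c * Real.exp (-(c * u))) u := by
    have := ((hasDerivAt_id u).const_mul c).neg.exp
    simpa [mul_comm] using this
  have h2 : HasDerivAt (fun s => 1 + 1 / (c * s)) (-(c / (c * u) ^ 2)) u := by
    have := (((hasDerivAt_id u).const_mul c).inv hcu).const_add 1
    simpa [one_div, neg_div] using this
  have h3 : HasDerivAt (fun s => Real.log (1 + 1 / (c * s)))
      (-(c / (c * u) ^ 2) / (1 + 1 / (c * u))) u := h2.log hinner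
  have := h1.mul h3
  refine this.congr_deriv ?_
  field_simp
  ring

lemma log_ge (x : ℝ) (hx : 0 < x) : 1 / (x + 1) ≤ Real.log (1 + 1 / x) := by
  have h1 : (0:ℝ) < x / (x + 1) := by positivity
  have h2 := Real.log_le_sub_one_of_pos h1
  have h3 : Real.log (x / (x + 1)) = - Real.log ((x + 1) / x) := by
    rw [← Real.log_inv]; congr 1; field_simp
  have h4 : (x + 1) / x = 1 + 1 / x := by field_simp
  have h5 : x / (x + 1) - 1 = -(1 / (x + 1)) := by field_simp; ring
  rw [h3, h4, h5] at h2
  linarith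

lemma key (c : ℝ) (hc : 0 < c) (a : ℝ) (ha : 0 < a) :
    Real.exp (-(c * (a + 1))) / (a + 1) ≤ hfun c a - hfun c (a + 1) := by
  set b := a + 1 with hb
  have hbpos : 0 < b := by positivity
  set K := Real.exp (-(c * b)) / b with hK
  have hmono : AntitoneOn (fun u => hfun c u + u * K) (Set.Icc a b) := by
    apply antitoneOn_of_deriv_nonpos (convex_Icc a b)
    · apply ContinuousOn.add _ (continuousOn_id.mul continuousOn_const)
      intro u hu
      have hu0 : 0 < u := lt_of_lt_of_le ha hu.1
      exact ((hfun_deriv c u hc hu0).continuousAt).continuousWithinAt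
    · intro u hu
      rw [interior_Icc] at hu
      have hu0 : 0 < u := lt_trans ha hu.1
      exact ((hfun_deriv c u hc hu0).add
        ((hasDerivAt_id u).mul_const K)).differentiableAt.differentiableWithinAt
    · intro u hu
      rw [interior_Icc] at hu
      have hu0 : 0 < u := lt_trans ha hu.1
      have hD : HasDerivAt (fun u => hfun c u + u * K)
          (-(Real.exp (-(c * u)) * (c * Real.log (1 + 1 / (c * u)) + 1 / (u * (c * u + 1)))) + K)
          u := by
        exact ((hfun_deriv c u hc hu0).add ((hasDerivAt_id u).mul_const K)).congr_deriv (by simp)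
      rw [hD.deriv]
      -- need : -(exp(-(c*u)) * (c*log(1+1/(c*u)) + 1/(u*(c*u+1)))) + K ≤ 0
      have hlog : c / (c * u + 1) ≤ c * Real.log (1 + 1 / (c * u)) := by
        have := log_ge (c * u) (by positivity)
        calc c / (c * u + 1) = c * (1 / (c * u + 1)) := by ring
        _ ≤ c * Real.log (1 + 1 / (c * u)) := by
            exact mul_le_mul_of_nonneg_left this hc.le
      have hsum : 1 / u ≤ c * Real.log (1 + 1 / (c * u)) + 1 / (u * (c * u + 1)) := by
        have : c / (c * u + 1) + 1 / (u * (c * u + 1)) = 1 / u := by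
          field_simp
        linarith
      have hKle : K ≤ Real.exp (-(c * u)) / u := by
        exact div_le_div₀ (Real.exp_pos _).le
          (Real.exp_le_exp.2 (by nlinarith [hu.2.le, hc.le])) hu0 hu.2.le
      have hq : Real.exp (-(c * u)) / u ≤
          Real.exp (-(c * u)) * (c * Real.log (1 + 1 / (c * u)) + 1 / (u * (c * u + 1))) := by
        rw [div_eq_mul_one_div]
        exact mul_le_mul_of_nonneg_left hsum (Real.exp_pos _).le
      linarith
  have := hmono (Set.left_mem_Icc.2 (by linarith)) (Set.right_mem_Icc.2 (by linarith)) (by linarith)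
  simp only [hb] at this ⊢
  rw [hK] at this
  linarith

lemma sum_le (c : ℝ) (hc : 0 < c) (tt : ℕ) (htt : 1 ≤ tt) :
    ∀ n, tt ≤ n → ∑ t ∈ Finset.Icc (tt + 1) n, Real.exp (-(c * t)) / t ≤
      hfun c tt - hfun c n := by
  intro n hn
  induction n, hn using Nat.le_induction with
  | base => simp [Finset.Icc_eq_empty_of_lt (Nat.lt_succ_self tt)]
  | succ n hn ih =>
      rw [Finset.sum_Icc_succ_top (by omega : tt + 1 ≤ n + 1)]
      have hkey := key c hc (n : ℝ) (by exact_mod_cast lt_of_lt_of_le (by norm_num) (le_trans htt hn))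
      push_cast
      push_cast at ih
      linarith

lemma log_half (μ td : ℝ) (hμ : 0 < μ) (htd : 0 < td) :
    (1 / 2) * Real.log (1 + 1 / (μ * td)) ≤ Real.log (1 + 1 / (2 * μ * td)) := by
  set y := 1 / (2 * μ * td) with hy
  have hy0 : 0 < y := by positivity
  have h2 : 2 * y = 1 / (μ * td) := by rw [hy]; field_simp
  have h1 : 1 + 1 / (μ * td) ≤ (1 + y) ^ 2 := by nlinarith [sq_nonneg y]
  have h3 := Real.log_le_log (by positivity) h1
  rw [Real.log_pow] at h3
  push_cast at h3
  linarith

/-- Summation bound for the momentum phase of the SGMEM stability analysis,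
obtained via the exponential integral `E₁`:
`Σ_{t=t̃+1}^{t_d} e^{2μ(t_d−t)}/t ≤ e^{2μ(t_d−t̃)}·ln(1+1/(2μt̃)) − (1/2)·ln(1+1/(μt_d))`. -/
theorem stmt_16 (μ : ℝ) (hμ : 0 < μ) (tt td : ℕ) (htt : 1 ≤ tt) (httd : tt < td) :
    ∑ t ∈ Finset.Icc (tt + 1) td, Real.exp (2 * μ * ((td : ℝ) - (t : ℝ))) / (t : ℝ) ≤
      Real.exp (2 * μ * ((td : ℝ) - (tt : ℝ))) * Real.log (1 + 1 / (2 * μ * (tt : ℝ)))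
        - (1 / 2) * Real.log (1 + 1 / (μ * (td : ℝ))) := by
  set c := 2 * μ with hc
  have hcpos : 0 < c := by positivity
  have htdR : (0 : ℝ) < td := by exact_mod_cast Nat.lt_of_lt_of_le (by omega) httd.le
  have h1 : ∀ t ∈ Finset.Icc (tt + 1) td,
      Real.exp (c * ((td : ℝ) - (t : ℝ))) / (t : ℝ)
        = Real.exp (c * td) * (Real.exp (-(c * t)) / t) := by
    intro t ht
    rw [mul_div_assoc', ← Real.exp_add]
    congr 2
    ring
  rw [Finset.sum_congr rfl h1, ← Finset.mul_sum]
  have h2 := sum_le c hcpos tt htt td httd.le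
  have h3 : Real.exp (c * td) * (∑ t ∈ Finset.Icc (tt + 1) td, Real.exp (-(c * t)) / t)
      ≤ Real.exp (c * td) * (hfun c tt - hfun c td) :=
    mul_le_mul_of_nonneg_left h2 (Real.exp_pos _).le
  refine le_trans h3 ?_
  have e1 : Real.exp (c * td) * Real.exp (-(c * tt)) = Real.exp (c * ((td : ℝ) - tt)) := by
    rw [← Real.exp_add]; congr 1; ring
  have e2 : Real.exp (c * td) * Real.exp (-(c * td)) = 1 := by
    rw [← Real.exp_add]; simp
  have heq : Real.exp (c * td) * (hfun c tt - hfun c td)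
      = Real.exp (c * ((td : ℝ) - tt)) * Real.log (1 + 1 / (c * tt))
        - Real.log (1 + 1 / (c * td)) := by
    simp only [hfun]
    rw [mul_sub, ← mul_assoc, ← mul_assoc, e1, e2, one_mul]
  rw [heq]
  have := log_half μ td hμ htdR
  rw [← hc] at this
  linarith
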